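/- Let m be even, m ≥ 2, and let y ∈ Ỹ_m with y_0 = 0 and y_1 = 1. Then the set S̃(y) is nonempty, where S̃(y) is the set of pairs (x, x') ∈ X_m × X̃_m such that x + x' = y, 𝔖(x) ∪ 𝔖(x') = R(y), 𝔖(x) ∩ 𝔖(x') = R_0(y), and, in case the only odd-cardinality interval of 𝔉(y) is the one containing 0, additionally 𝔖(x') = {0}. -/
import Mathlib


open Finset

/-- `X_m`: sequences `(x_0,…,x_m)` in `ℕ` with `x i ≤ x (i+1)` and `x i < x (i+2)`. -/
def IsX (m : ℕ) (x : ℕ → ℕ) : Prop :=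
  (∀ i, i < m → x i ≤ x (i + 1)) ∧ (∀ i, i + 2 ≤ m → x i < x (i + 2))

/-- `Y_m`: sequences with `y i ≤ y (i+1)` and `y i + 2 ≤ y (i+2)`. -/
def IsY (m : ℕ) (y : ℕ → ℕ) : Prop :=
  (∀ i, i < m → y i ≤ y (i + 1)) ∧ (∀ i, i + 2 ≤ m → y i + 2 ≤ y (i + 2))

/-- `ℰ_m`: weakly increasing sequences. -/
def IsE (m : ℕ) (e : ℕ → ℕ) : Prop := ∀ i, i < m → e i ≤ e (i + 1)

/-- `𝔖(x)`: indices `i ∈ [0,m]` with `x (i-1) < x i < x (i+1)`,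
with conventions `x_{-1} = -∞`, `x_{m+1} = +∞`. -/
def SS (m : ℕ) (x : ℕ → ℕ) : Finset ℕ :=
  (Finset.range (m + 1)).filter
    (fun i => (i = 0 ∨ x (i - 1) < x i) ∧ (i = m ∨ x i < x (i + 1)))

/-- `𝔉(y)`: intervals `[i,j] ⊆ [0,m]` with
`y_{i-1}-(i-1) < y_i-i = ⋯ = y_j-j < y_{j+1}-(j+1)` (conventions `±∞` at the ends),
encoded as pairs `(i, j)`. -/
def FF (m : ℕ) (y : ℕ → ℕ) : Finset (ℕ × ℕ) :=
  ((Finset.range (m + 1)) ×ˢ (Finset.range (m + 1))).filter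
    (fun p => p.1 ≤ p.2 ∧
      (p.1 = 0 ∨ ((y (p.1 - 1) : ℤ) - ((p.1 : ℤ) - 1) < (y p.1 : ℤ) - (p.1 : ℤ))) ∧
      (p.2 = m ∨ ((y p.2 : ℤ) - (p.2 : ℤ) < (y (p.2 + 1) : ℤ) - ((p.2 : ℤ) + 1))) ∧
      (∀ k ∈ Finset.Ico p.1 p.2, ((y k : ℤ) - (k : ℤ) = (y (k + 1) : ℤ) - ((k : ℤ) + 1))))

/-- `𝔉'(y)`: the intervals in `𝔉(y)` of odd cardinality. -/
def FF' (m : ℕ) (y : ℕ → ℕ) : Finset (ℕ × ℕ) :=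
  (FF m y).filter (fun p => Odd (p.2 - p.1 + 1))

/-- `R(y)`: endpoints of intervals in `𝔉(y)`. -/
def RR (m : ℕ) (y : ℕ → ℕ) : Finset ℕ :=
  (Finset.range (m + 1)).filter (fun k => ∃ p ∈ FF m y, k = p.1 ∨ k = p.2)

/-- `R_0(y)`: those `k` with `[k,k] ∈ 𝔉(y)`. -/
def RR0 (m : ℕ) (y : ℕ → ℕ) : Finset ℕ :=
  (Finset.range (m + 1)).filter (fun k => (k, k) ∈ FF m y)

/-- `S(y)`: pairs `(x, x') ∈ X_m × X_m` with `x + x' = y`,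
`𝔖(x) ∪ 𝔖(x') = R(y)`, `𝔖(x) ∩ 𝔖(x') = R_0(y)`, and `𝔖(x') = ∅` if `𝔉'(y) = ∅`. -/
def IsS (m : ℕ) (y x x' : ℕ → ℕ) : Prop :=
  IsX m x ∧ IsX m x' ∧ (∀ i, i ≤ m → x i + x' i = y i) ∧
  SS m x ∪ SS m x' = RR m y ∧ SS m x ∩ SS m x' = RR0 m y ∧
  (FF' m y = ∅ → SS m x' = ∅)

/-- `X̃_m`: elements of `X_m` with `x 0 = 0`, `x 1 ≥ 1`. -/
def IsXt (m : ℕ) (x : ℕ → ℕ) : Prop := IsX m x ∧ x 0 = 0 ∧ 1 ≤ x 1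

/-- `S̃(y)`: pairs `(x, x') ∈ X_m × X̃_m` with `x + x' = y`,
`𝔖(x) ∪ 𝔖(x') = R(y)`, `𝔖(x) ∩ 𝔖(x') = R_0(y)`, and `𝔖(x') = {0}` in case
every odd-cardinality interval of `𝔉(y)` has left endpoint `0`. -/
def IsSt (m : ℕ) (y x x' : ℕ → ℕ) : Prop :=
  IsX m x ∧ IsXt m x' ∧ (∀ i, i ≤ m → x i + x' i = y i) ∧
  SS m x ∪ SS m x' = RR m y ∧ SS m x ∩ SS m x' = RR0 m y ∧
  ((∀ p ∈ FF' m y, p.1 = 0) → SS m x' = {0})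


/-- increments of `x'`. -/
def ap (y : ℕ → ℕ) : ℕ → ℕ
  | 0 => if y 1 - y 0 = 0 then 0 else 1
  | (k+1) =>
      if y (k+2) - y (k+1) = 0 then 0
      else if 2 ≤ y (k+2) - y (k+1) then 1
      else if y (k+1) - y k = 1 then 1 - ap y k
      else 0

lemma ap_le_one (y : ℕ → ℕ) (k : ℕ) : ap y k ≤ 1 := by
  cases k <;> simp only [ap] <;> split_ifs <;> omega

lemma ap0 {y : ℕ → ℕ} {k : ℕ} (h : y (k+1) ≤ y k) : ap y k = 0 := by
  cases k with
  | zero => rw [show (0:ℕ)+1 = 1 from rfl] at h; simp only [ap]; split_ifs <;> omega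
  | succ n => rw [show n+1+1 = n+2 from rfl] at h; simp only [ap]; split_ifs <;> omega

lemma ap2 {y : ℕ → ℕ} {k : ℕ} (h : y k + 2 ≤ y (k+1)) : ap y k = 1 := by
  cases k with
  | zero => rw [show (0:ℕ)+1 = 1 from rfl] at h; simp only [ap]; split_ifs <;> omega
  | succ n => rw [show n+1+1 = n+2 from rfl] at h; simp only [ap]; split_ifs <;> omega

lemma ap10 {y : ℕ → ℕ} (h : y 1 = y 0 + 1) : ap y 0 = 1 := by
  simp only [ap]; split_ifs <;> omega

lemma ap1S {y : ℕ → ℕ} {k : ℕ} (h2 : y (k+2) = y (k+1) + 1) (h1 : y (k+1) = y k + 1) :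
    ap y (k+1) = 1 - ap y k := by
  simp only [ap]; split_ifs <;> omega

lemma ap1S' {y : ℕ → ℕ} {k : ℕ} (h2 : y (k+2) = y (k+1) + 1) (h1 : y (k+1) ≠ y k + 1) :
    ap y (k+1) = 0 := by
  simp only [ap]; split_ifs with hA hB hC
  · rfl
  · omega
  · exfalso; apply h1; omega
  · rfl

/-- `x' i`: partial sums of `ap`. -/
def xp (y : ℕ → ℕ) (i : ℕ) : ℕ := ∑ k ∈ Finset.range i, ap y k

lemma xp_zero (y : ℕ → ℕ) : xp y 0 = 0 := by simp [xp]

lemma xp_succ (y : ℕ → ℕ) (i : ℕ) : xp y (i+1) = xp y i + ap y i := by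
  simp [xp, Finset.sum_range_succ]

lemma y_mono {m : ℕ} {y : ℕ → ℕ} (hy : IsY m y) : ∀ j, j ≤ m → ∀ i, i ≤ j → y i ≤ y j := by
  intro j
  induction j with
  | zero => intro _ i hi; have : i = 0 := by omega
            rw [this]
  | succ n ih =>
    intro hn i hi
    rcases Nat.eq_or_lt_of_le hi with h | h
    · exact h ▸ le_refl _
    · exact le_trans (ih (by omega) i (by omega)) (hy.1 n (by omega))

lemma ap_le_step {m : ℕ} {y : ℕ → ℕ} (hy : IsY m y) {k : ℕ} (hk : k < m) :
    y k + ap y k ≤ y (k+1) := by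
  have h := hy.1 k hk
  by_cases hb2 : y k + 2 ≤ y (k+1)
  · have := ap2 (k := k) (y := y) hb2; omega
  · by_cases hb0 : y (k+1) ≤ y k
    · have := ap0 (k := k) (y := y) hb0; omega
    · have := ap_le_one y k; omega

lemma xp_le {m : ℕ} {y : ℕ → ℕ} (hy : IsY m y) : ∀ i, i ≤ m → xp y i ≤ y i := by
  intro i
  induction i with
  | zero => simp [xp_zero]
  | succ n ih =>
    intro hn
    rw [xp_succ]
    have h1 := ih (by omega)
    have h2 := ap_le_step hy (k := n) (by omega)
    omega

lemma key_pair {m : ℕ} {y : ℕ → ℕ} (hy : IsY m y) {i : ℕ} (h : i + 2 ≤ m) :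
    1 ≤ ap y i + ap y (i+1) ∧ y i + ap y i + ap y (i+1) < y (i+2) := by
  have hb01 := hy.1 i (by omega)
  have hb12 := hy.1 (i+1) (by omega)
  have hsum := hy.2 i h
  have a0 := ap_le_one y i
  have a1 := ap_le_one y (i+1)
  by_cases e1 : y (i+1) = y i + 1
  · by_cases e2 : y (i+2) = y (i+1) + 1
    · have := ap1S e2 e1
      constructor <;> omega
    · have hb2 : y (i+1) + 2 ≤ y (i+2) := by omega
      have := ap2 hb2
      constructor <;> omega
  · by_cases e0 : y (i+1) ≤ y i
    · have h1 := ap0 e0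
      have hb2 : y (i+1) + 2 ≤ y (i+2) := by omega
      have h2 := ap2 hb2
      constructor <;> omega
    · have h1 := ap2 (show y i + 2 ≤ y (i+1) by omega)
      have s2 : y (i+1) + ap y (i+1) ≤ y (i+2) := ap_le_step hy (show i+1 < m by omega)
      constructor <;> omega

lemma isX_xp {m : ℕ} {y : ℕ → ℕ} (hy : IsY m y) : IsX m (xp y) := by
  constructor
  · intro i _; rw [xp_succ]; omega
  · intro i hi
    have h := (key_pair hy hi).1
    have e1 : xp y (i+2) = xp y i + ap y i + ap y (i+1) := by
      rw [show i+2 = (i+1)+1 from rfl, xp_succ, xp_succ]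
    omega

lemma isX_xx {m : ℕ} {y : ℕ → ℕ} (hy : IsY m y) : IsX m (fun i => y i - xp y i) := by
  constructor
  · intro i hi
    simp only
    have h1 := xp_le hy i (by omega)
    have h2 := ap_le_step hy hi
    have h3 := xp_succ y i
    omega
  · intro i hi
    simp only
    have h1 := xp_le hy i (by omega)
    have h2 := (key_pair hy hi).2
    have e1 : xp y (i+2) = xp y i + ap y i + ap y (i+1) := by
      rw [show i+2 = (i+1)+1 from rfl, xp_succ, xp_succ]
    omega

lemma mem_SS_xp {m : ℕ} {y : ℕ → ℕ} (i : ℕ) :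
    i ∈ SS m (xp y) ↔ i ≤ m ∧ (i = 0 ∨ ap y (i-1) = 1) ∧ (i = m ∨ ap y i = 1) := by
  simp only [SS, mem_filter, mem_range, Nat.lt_succ_iff]
  cases i with
  | zero =>
    rw [xp_succ, xp_zero]
    have := ap_le_one y 0
    omega
  | succ j =>
    simp only [Nat.add_sub_cancel]
    rw [xp_succ y (j+1), xp_succ y j]
    have := ap_le_one y j
    have := ap_le_one y (j+1)
    omega

lemma mem_SS_xx {m : ℕ} {y : ℕ → ℕ} (hy : IsY m y) (i : ℕ) :
    i ∈ SS m (fun i => y i - xp y i) ↔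
      i ≤ m ∧ (i = 0 ∨ y (i-1) + ap y (i-1) < y i) ∧ (i = m ∨ y i + ap y i < y (i+1)) := by
  simp only [SS, mem_filter, mem_range, Nat.lt_succ_iff]
  by_cases him : i ≤ m
  · have hxpi := xp_le hy i him
    have hRfact : i = m ∨ (xp y (i+1) = xp y i + ap y i ∧ xp y (i+1) ≤ y (i+1)
        ∧ y i + ap y i ≤ y (i+1)) := by
      rcases Nat.eq_or_lt_of_le him with h | h
      · exact Or.inl h
      · exact Or.inr ⟨xp_succ y i, xp_le hy (i+1) (by omega), ap_le_step hy h⟩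
    cases i with
    | zero =>
      have hz := xp_zero y
      omega
    | succ j =>
      simp only [Nat.add_sub_cancel]
      have hxpj := xp_le hy j (by omega)
      have hstep : xp y (j+1) = xp y j + ap y j := xp_succ y j
      have hmono : y j + ap y j ≤ y (j+1) := ap_le_step hy (by omega)
      omega
  · omega

lemma mem_FF_nat {m : ℕ} {y : ℕ → ℕ} {i j : ℕ} :
    (i, j) ∈ FF m y ↔ i ≤ j ∧ j ≤ m ∧
      (i = 0 ∨ y (i-1) + 2 ≤ y i) ∧ (j = m ∨ y j + 2 ≤ y (j+1)) ∧
      (∀ k ∈ Finset.Ico i j, y (k+1) = y k + 1) := by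
  simp only [FF, mem_filter, Finset.mem_product, mem_range, Nat.lt_succ_iff]
  constructor
  · rintro ⟨⟨hi, hj⟩, hij, hL, hR, hE⟩
    refine ⟨hij, hj, ?_, ?_, fun k hk => ?_⟩
    · rcases hL with h | h
      · exact Or.inl h
      · right; omega
    · rcases hR with h | h
      · exact Or.inl h
      · right; omega
    · have := hE k hk; omega
  · rintro ⟨hij, hj, hL, hR, hE⟩
    refine ⟨⟨by omega, hj⟩, hij, ?_, ?_, fun k hk => ?_⟩
    · rcases hL with h | h
      · exact Or.inl h
      · right; omega
    · rcases hR with h | h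
      · exact Or.inl h
      · right; omega
    · have := hE k hk; omega

lemma mem_FF'_nat {m : ℕ} {y : ℕ → ℕ} {i j : ℕ} :
    (i, j) ∈ FF' m y ↔ (i, j) ∈ FF m y ∧ Odd (j - i + 1) := mem_filter

/-- extend a run of unit increments to the right -/
lemma run_right {m : ℕ} {y : ℕ → ℕ} (hy : IsY m y) :
    ∀ n i, m - i = n → i < m → y (i+1) = y i + 1 →
    ∃ j, i < j ∧ j ≤ m ∧ (∀ k ∈ Finset.Ico i j, y (k+1) = y k + 1) ∧
      (j = m ∨ y j + 2 ≤ y (j+1)) := by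
  intro n
  induction n with
  | zero => intro i hn hi _; omega
  | succ n ih =>
    intro i hn hi hb
    by_cases him : i + 1 = m
    · refine ⟨m, by omega, le_refl m, fun k hk => ?_, Or.inl rfl⟩
      have : k = i := by simp only [Finset.mem_Ico] at hk; omega
      rw [this]; exact hb
    · have h2 : y (i+1) + 1 ≤ y (i+2) := by
        have := hy.2 i (by omega); omega
      by_cases hb2 : y (i+2) = y (i+1) + 1
      · obtain ⟨j, hj1, hj2, hj3, hj4⟩ := ih (i+1) (by omega) (by omega) hb2
        refine ⟨j, by omega, hj2, fun k hk => ?_, hj4⟩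
        simp only [Finset.mem_Ico] at hk
        by_cases hki : k = i
        · rw [hki]; exact hb
        · exact hj3 k (by simp only [Finset.mem_Ico]; omega)
      · refine ⟨i+1, by omega, by omega, fun k hk => ?_,
          Or.inr (by show y (i+1) + 2 ≤ y (i+2); omega)⟩
        have : k = i := by simp only [Finset.mem_Ico] at hk; omega
        rw [this]; exact hb

/-- extend a run of unit increments to the left -/
lemma run_left {m : ℕ} {y : ℕ → ℕ} (hy : IsY m y) :
    ∀ i, 0 < i → i ≤ m → y i = y (i-1) + 1 →
    ∃ l, l < i ∧ (∀ k ∈ Finset.Ico l i, y (k+1) = y k + 1) ∧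
      (l = 0 ∨ y (l-1) + 2 ≤ y l) := by
  intro i
  induction i with
  | zero => omega
  | succ j ih =>
    intro _ him hb
    simp only [Nat.add_sub_cancel] at hb
    by_cases hj0 : j = 0
    · subst hj0
      exact ⟨0, by omega, fun k hk => by
        have : k = 0 := by simp only [Finset.mem_Ico] at hk; omega
        rw [this]; exact hb, Or.inl rfl⟩
    · by_cases hb' : y j = y (j-1) + 1
      · obtain ⟨l, hl1, hl2, hl3⟩ := ih (by omega) (by omega) hb'
        refine ⟨l, by omega, fun k hk => ?_, hl3⟩
        simp only [Finset.mem_Ico] at hk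
        by_cases hkj : k = j
        · rw [hkj]; exact hb
        · exact hl2 k (by simp only [Finset.mem_Ico]; omega)
      · -- previous step is not 1; it must be ≥ 2 (0 is impossible)
        have h1 : y (j-1) ≤ y j := y_mono hy j (by omega) (j-1) (by omega)
        have h2 : y (j-1) + 2 ≤ y (j+1) := by
          have := hy.2 (j-1) (by omega)
          have : y (j-1) + 2 ≤ y (j-1+2) := this
          have he : j - 1 + 2 = j + 1 := by omega
          rwa [he] at this
        refine ⟨j, by omega, fun k hk => ?_, Or.inr (by omega)⟩
        have : k = j := by simp only [Finset.mem_Ico] at hk; omega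
        rw [this]; exact hb

lemma mem_RR0_iff {m : ℕ} {y : ℕ → ℕ} (i : ℕ) :
    i ∈ RR0 m y ↔ i ≤ m ∧ (i = 0 ∨ y (i-1) + 2 ≤ y i) ∧ (i = m ∨ y i + 2 ≤ y (i+1)) := by
  simp only [RR0, mem_filter, mem_range, Nat.lt_succ_iff, mem_FF_nat]
  constructor
  · rintro ⟨him, _, _, hL, hR, _⟩
    exact ⟨him, hL, hR⟩
  · rintro ⟨him, hL, hR⟩
    exact ⟨him, le_refl i, him, hL, hR, fun k hk => by simp at hk⟩

lemma mem_RR_iff {m : ℕ} {y : ℕ → ℕ} (hy : IsY m y) (i : ℕ) :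
    i ∈ RR m y ↔ i ≤ m ∧
      (((i = 0 ∨ y (i-1) + 2 ≤ y i) ∧ (i = m ∨ y i + 1 ≤ y (i+1))) ∨
       ((i = 0 ∨ y (i-1) + 1 ≤ y i) ∧ (i = m ∨ y i + 2 ≤ y (i+1)))) := by
  simp only [RR, mem_filter, mem_range, Nat.lt_succ_iff]
  constructor
  · rintro ⟨him, p, hp, hip⟩
    rw [show p = (p.1, p.2) from rfl, mem_FF_nat] at hp
    obtain ⟨hij, hjm, hL, hR, hE⟩ := hp
    refine ⟨him, ?_⟩
    rcases hip with h1 | h2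
    · left
      subst h1
      refine ⟨hL, ?_⟩
      rcases Nat.eq_or_lt_of_le hij with he | hlt
      · rcases hR with h | h
        · exact Or.inl (by omega)
        · right; rw [he]; omega
      · have := hE p.1 (by simp only [Finset.mem_Ico]; omega)
        right; omega
    · right
      subst h2
      refine ⟨?_, hR⟩
      rcases Nat.eq_or_lt_of_le hij with he | hlt
      · rcases hL with h | h
        · exact Or.inl (by omega)
        · right; rw [← he]; omega
      · have h := hE (p.2 - 1) (by simp only [Finset.mem_Ico]; omega)
        rw [show p.2 - 1 + 1 = p.2 by omega] at h
        right; omega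
  · rintro ⟨him, hcase | hcase⟩
    · obtain ⟨hP, hQw⟩ := hcase
      by_cases hQ : i = m ∨ y i + 2 ≤ y (i+1)
      · exact ⟨him, (i, i), mem_FF_nat.mpr ⟨le_refl i, him, hP, hQ,
          fun k hk => by simp at hk⟩, Or.inl rfl⟩
      · push_neg at hQ
        have hb : y (i+1) = y i + 1 := by
          have := hy.1 i (by omega); omega
        obtain ⟨j, hj1, hj2, hj3, hj4⟩ := run_right hy (m - i) i rfl (by omega) hb
        exact ⟨him, (i, j), mem_FF_nat.mpr ⟨by omega, hj2, hP, hj4, hj3⟩, Or.inl rfl⟩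
    · obtain ⟨hPw, hQ⟩ := hcase
      by_cases hP : i = 0 ∨ y (i-1) + 2 ≤ y i
      · exact ⟨him, (i, i), mem_FF_nat.mpr ⟨le_refl i, him, hP, hQ,
          fun k hk => by simp at hk⟩, Or.inr rfl⟩
      · push_neg at hP
        have hb : y i = y (i-1) + 1 := by
          have := y_mono hy i him (i-1) (by omega); omega
        obtain ⟨l, hl1, hl2, hl3⟩ := run_left hy i (by omega) him hb
        exact ⟨him, (l, i), mem_FF_nat.mpr ⟨by omega, him, hl3, hQ, hl2⟩, Or.inr rfl⟩

lemma union_inter_eq {m : ℕ} {y : ℕ → ℕ} (hy : IsY m y) (hm : 2 ≤ m)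
    (h0 : y 0 = 0) (h1 : y 1 = 1) :
    SS m (fun i => y i - xp y i) ∪ SS m (xp y) = RR m y ∧
    SS m (fun i => y i - xp y i) ∩ SS m (xp y) = RR0 m y := by
  constructor <;>
  · ext i
    simp only [mem_union, mem_inter, mem_SS_xx hy, mem_SS_xp, mem_RR_iff hy, mem_RR0_iff]
    by_cases him : i ≤ m
    · cases i with
      | zero =>
        have ha : ap y 0 = 1 := ap10 (by omega)
        have e1 : y (0+1) = 1 := h1
        omega
      | succ j =>
        have f1 : y j ≤ y (j+1) := hy.1 j (by omega)
        have a0 := ap_le_one y j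
        have a1 := ap_le_one y (j+1)
        simp only [Nat.add_sub_cancel]
        by_cases eL : y (j+1) = y j + 1
        · by_cases him2 : j + 1 = m
          · omega
          · have f2 : y (j+1) ≤ y (j+1+1) := hy.1 (j+1) (by omega)
            have f3 : y j + 2 ≤ y (j+1+1) := hy.2 j (by omega)
            by_cases eR : y (j+1+1) = y (j+1) + 1
            · have hS : ap y (j+1) = 1 - ap y j := ap1S eR eL
              omega
            · by_cases eR0 : y (j+1+1) ≤ y (j+1)
              · omega
              · have hR2 : ap y (j+1) = 1 := ap2 (show y (j+1) + 2 ≤ y (j+1+1) by omega)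
                omega
        · by_cases eL0 : y (j+1) ≤ y j
          · have hL0 : ap y j = 0 := ap0 eL0
            omega
          · have hL2 : ap y j = 1 := ap2 (by omega)
            by_cases him2 : j + 1 = m
            · omega
            · have f2 : y (j+1) ≤ y (j+1+1) := hy.1 (j+1) (by omega)
              by_cases eR : y (j+1+1) = y (j+1) + 1
              · have hR : ap y (j+1) = 0 := ap1S' eR (by omega)
                omega
              · by_cases eR0 : y (j+1+1) ≤ y (j+1)
                · have hR0 : ap y (j+1) = 0 := ap0 eR0
                  omega
                · have hR2 : ap y (j+1) = 1 := ap2 (by omega)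
                  omega
    · omega

lemma ap_run_zero {y : ℕ → ℕ} :
    ∀ t, (∀ k, k ≤ t → y (k+1) = y k + 1) → ap y t = 1 - t % 2 := by
  intro t
  induction t with
  | zero => intro h; simpa using ap10 (h 0 (le_refl 0))
  | succ t ih =>
    intro h
    have h1 := ap1S (h (t+1) (le_refl _)) (h t (by omega))
    have h2 := ih (fun k hk => h k (by omega))
    omega

lemma ap_run_pos {y : ℕ → ℕ} {l : ℕ} (hl : 0 < l) (hnot : y l ≠ y (l-1) + 1) :
    ∀ t, (∀ k, l ≤ k → k ≤ l + t → y (k+1) = y k + 1) → ap y (l + t) = t % 2 := by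
  intro t
  induction t with
  | zero =>
    intro h
    obtain ⟨j, rfl⟩ : ∃ j, l = j + 1 := ⟨l - 1, by omega⟩
    simp only [Nat.add_sub_cancel] at hnot
    have h2 : y (j+1+1) = y (j+1) + 1 := h (j+1) (le_refl _) (by omega)
    simpa using ap1S' h2 hnot
  | succ t ih =>
    intro h
    have h1 : ap y ((l+t)+1) = 1 - ap y (l+t) :=
      ap1S (h (l+t+1) (by omega) (by omega)) (h (l+t) (by omega) (by omega))
    have h2 := ih (fun k hk hk2 => h k hk (by omega))
    have he : l + (t+1) = (l+t)+1 := by omega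
    rw [he]
    omega

lemma parity_lemma {m : ℕ} {y : ℕ → ℕ} (hy : IsY m y) (hm2 : 2 ≤ m)
    (H : ∀ p ∈ FF' m y, p.1 = 0) :
    ∀ n k, m - k ≤ n → 0 < k → k ≤ m → y (k-1) + 2 ≤ y k → (m - k) % 2 = 1 := by
  intro n
  induction n with
  | zero =>
    intro k hn hk0 hkm hP
    have hkm' : k = m := by omega
    have hmem : (k, k) ∈ FF' m y := mem_FF'_nat.mpr
      ⟨mem_FF_nat.mpr ⟨le_refl k, hkm, Or.inr hP, Or.inl hkm',
        fun k hk => by simp at hk⟩, by simp⟩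
    have := H _ hmem
    simp at this
    omega
  | succ n ih =>
    intro k hn hk0 hkm hP
    by_cases hkm' : k = m
    · have hmem : (k, k) ∈ FF' m y := mem_FF'_nat.mpr
        ⟨mem_FF_nat.mpr ⟨le_refl k, hkm, Or.inr hP, Or.inl hkm',
          fun k hk => by simp at hk⟩, by simp⟩
      have := H _ hmem
      simp at this
      omega
    · have hkm2 : k < m := by omega
      have f1 : y k ≤ y (k+1) := hy.1 k hkm2
      by_cases e0 : y (k+1) ≤ y k
      · -- zero step; next one is ≥ 2
        by_cases hk1 : k + 1 = m
        · omega
        · have f3 : y k + 2 ≤ y (k+2) := hy.2 k (by omega)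
          have hrec := ih (k+2) (by omega) (by omega) (by omega)
            (show y (k+2-1) + 2 ≤ y (k+2) by
              rw [show k+2-1 = k+1 by omega]; omega)
          omega
      · by_cases e2 : y k + 2 ≤ y (k+1)
        · -- singleton interval not at 0: contradiction
          have hmem : (k, k) ∈ FF' m y := mem_FF'_nat.mpr
            ⟨mem_FF_nat.mpr ⟨le_refl k, by omega, Or.inr hP, Or.inr e2,
              fun k hk => by simp at hk⟩, by simp⟩
          have := H _ hmem
          simp at this
          omega
        · -- unit step: take the whole run
          have e1 : y (k+1) = y k + 1 := by omega
          obtain ⟨j, hj1, hj2, hj3, hj4⟩ := run_right hy (m - k) k rfl hkm2 e1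
          have hFF : (k, j) ∈ FF m y := mem_FF_nat.mpr
            ⟨by omega, hj2, Or.inr hP, hj4, hj3⟩
          by_cases ho : (j - k + 1) % 2 = 1
          · have hmem : (k, j) ∈ FF' m y := mem_FF'_nat.mpr
              ⟨hFF, Nat.odd_iff.mpr ho⟩
            have := H _ hmem
            simp at this
            omega
          · by_cases hjm : j = m
            · omega
            · have hrec := ih (j+1) (by omega) (by omega) (by omega)
                (show y (j+1-1) + 2 ≤ y (j+1) by
                  rw [show j+1-1 = j by omega]; omega)
              omega

lemma ss_xp_singleton {m : ℕ} {y : ℕ → ℕ} (hy : IsY m y) (hm : Even m) (hm2 : 2 ≤ m)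
    (h0 : y 0 = 0) (h1 : y 1 = 1) (H : ∀ p ∈ FF' m y, p.1 = 0) :
    SS m (xp y) = {0} := by
  ext i
  simp only [mem_SS_xp, Finset.mem_singleton]
  constructor
  · rintro ⟨him, hL, hR⟩
    by_contra hne
    obtain ⟨j, rfl⟩ : ∃ j, i = j + 1 := ⟨i - 1, by omega⟩
    have hapL : ap y j = 1 := by
      rcases hL with h | h
      · omega
      · simpa using h
    have f1 : y j ≤ y (j+1) := hy.1 j (by omega)
    have hQ : (j + 1 = m) ∨ (j + 1 < m ∧ y (j+1) + 2 ≤ y (j+1+1)) := by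
      by_cases him2 : j + 1 = m
      · exact Or.inl him2
      · right
        refine ⟨by omega, ?_⟩
        have hapR : ap y (j+1) = 1 := by
          rcases hR with h | h
          · omega
          · exact h
        have f2 : y (j+1) ≤ y (j+1+1) := hy.1 (j+1) (by omega)
        by_cases eR : y (j+1+1) = y (j+1) + 1
        · by_cases eL : y (j+1) = y j + 1
          · have := ap1S eR eL; omega
          · have := ap1S' eR eL; omega
        · by_cases eR0 : y (j+1+1) ≤ y (j+1)
          · have := ap0 eR0; omega
          · omega
    have hQ' : j + 1 = m ∨ y (j+1) + 2 ≤ y ((j+1)+1) := by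
      rcases hQ with h | h
      · exact Or.inl h
      · exact Or.inr h.2
    by_cases eL : y (j+1) = y j + 1
    · -- we are inside a run of unit steps; find its left end
      obtain ⟨l, hl1, hl2, hl3⟩ := run_left hy (j+1) (by omega) him (by simpa using eL)
      by_cases hl0 : l = 0
      · subst hl0
        have hz : ap y j = 1 - j % 2 := ap_run_zero j (fun k hk =>
          hl2 k (by simp only [Finset.mem_Ico]; omega))
        have hme := Nat.even_iff.mp hm
        rcases hQ with h | h
        · omega
        · have hpar := parity_lemma hy hm2 H (m - (j+2)) (j+2) (le_refl _)
            (by omega) (by omega)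
            (show y (j+2-1) + 2 ≤ y (j+2) by
              rw [show j+2-1 = j+1 by omega]; exact h.2)
          omega
      · have hl0' : 0 < l := by omega
        have hnot : y l ≠ y (l - 1) + 1 := by
          rcases hl3 with h | h
          · omega
          · omega
        have hz := ap_run_pos hl0' hnot (j - l) (fun k hk1 hk2 =>
          hl2 k (by simp only [Finset.mem_Ico]; omega))
        rw [show l + (j - l) = j by omega] at hz
        have hmem : (l, j+1) ∈ FF' m y := mem_FF'_nat.mpr
          ⟨mem_FF_nat.mpr ⟨by omega, him, hl3, hQ', hl2⟩,
            Nat.odd_iff.mpr (by omega)⟩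
        have := H _ hmem
        simp at this
        omega
    · by_cases eL0 : y (j+1) ≤ y j
      · have := ap0 eL0; omega
      · have e2 : y j + 2 ≤ y (j+1) := by omega
        have hmem : (j+1, j+1) ∈ FF' m y := mem_FF'_nat.mpr
          ⟨mem_FF_nat.mpr ⟨le_refl _, him,
            Or.inr (show y (j+1-1) + 2 ≤ y (j+1) by
              rw [show j+1-1 = j by omega]; exact e2), hQ',
            fun k hk => by simp at hk⟩, by simp⟩
        have := H _ hmem
        simp at this
  · rintro rfl
    exact ⟨by omega, Or.inl rfl, Or.inr (ap10 (by omega))⟩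
theorem stmt13 (m : ℕ) (hm : Even m) (h2 : 2 ≤ m) (y : ℕ → ℕ) (hy : IsY m y)
    (h0 : y 0 = 0) (h1 : y 1 = 1) : ∃ x x' : ℕ → ℕ, IsSt m y x x' := by
  refine ⟨fun i => y i - xp y i, xp y, isX_xx hy,
    ⟨isX_xp hy, xp_zero y, ?_⟩, ?_, (union_inter_eq hy h2 h0 h1).1,
    (union_inter_eq hy h2 h0 h1).2, fun H => ss_xp_singleton hy hm h2 h0 h1 H⟩
  · have e : xp y 1 = ap y 0 := by simp [xp]
    have := ap10 (y := y) (by omega)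
    omega
  · intro i him
    have := xp_le hy i him
    simp only
    omega
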